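/- Let X be a measure space with finite measure ρ, c : X × {1,…,N} → ℝ with each c(·,i) integrable, and α ∈ ℝ^N. Fix γ ∈ ℝ^N and a measurable selection T : X → {1,…,N} with c(u,T(u)) + γ_{T(u)} = min_i (c(u,i)+γ_i) for ρ-a.e. u. Then for Φ(γ) = ∫_X min_i(c(u,i)+γ_i) dρ - Σ_i γ_i α_i, the vector v ∈ ℝ^N with v_i = ρ(T⁻¹({i})) - α_i belongs to the superdifferential of Φ at γ: for all κ ∈ ℝ^N, Φ(κ) ≤ Φ(γ) + ⟨v, κ - γ⟩. -/

import Mathlib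

open MeasureTheory

theorem superdifferential_of_Phi (X : Type*) [MeasurableSpace X]
    (ρ : Measure X) [IsFiniteMeasure ρ]
    (N : ℕ) (hN : 0 < N)
    (c : X → Fin N → ℝ) (hmeas : ∀ i, Measurable fun u => c u i)
    (hint : ∀ i, Integrable (fun u => c u i) ρ)
    (α : Fin N → ℝ) (γ : Fin N → ℝ)
    (T : X → Fin N) (hT : Measurable T)
    (hTmin : ∀ᵐ u ∂ρ, c u (T u) + γ (T u) = ⨅ i, (c u i + γ i))
    (v : Fin N → ℝ) (hv : ∀ i, v i = (ρ (T ⁻¹' {i})).toReal - α i) :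
    ∀ κ : Fin N → ℝ,
      ((∫ u, (⨅ i, (c u i + κ i)) ∂ρ) - ∑ i, κ i * α i) ≤
      ((∫ u, (⨅ i, (c u i + γ i)) ∂ρ) - ∑ i, γ i * α i) + ∑ i, v i * (κ i - γ i) := by
  intro κ
  haveI : Nonempty (Fin N) := ⟨⟨0, hN⟩⟩
  -- integrability of the infimum functions
  have hinf_int : ∀ κ' : Fin N → ℝ, Integrable (fun u => ⨅ i, (c u i + κ' i)) ρ := by
    intro κ'
    have hmeas' : Measurable fun u => ⨅ i, (c u i + κ' i) :=
      Measurable.iInf (fun i => (hmeas i).add measurable_const)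
    have hbound : Integrable (fun u => ∑ i, |c u i + κ' i|) ρ :=
      integrable_finset_sum _ (fun i _ => ((hint i).add (integrable_const _)).abs)
    refine hbound.mono' hmeas'.aestronglyMeasurable ?_
    filter_upwards with u
    rw [Real.norm_eq_abs, abs_le]
    constructor
    · refine le_ciInf fun i => ?_
      have h1 : -|c u i + κ' i| ≤ c u i + κ' i := neg_abs_le _
      have h2 : |c u i + κ' i| ≤ ∑ j, |c u j + κ' j| :=
        Finset.single_le_sum (f := fun j => |c u j + κ' j|) (fun j _ => abs_nonneg _) (Finset.mem_univ i)
      linarith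
    · have h1 : (⨅ i, (c u i + κ' i)) ≤ c u (Classical.arbitrary (Fin N)) + κ' (Classical.arbitrary (Fin N)) :=
        ciInf_le (Finite.bddBelow_range _) _
      have h2 : c u (Classical.arbitrary (Fin N)) + κ' (Classical.arbitrary (Fin N)) ≤
          |c u (Classical.arbitrary (Fin N)) + κ' (Classical.arbitrary (Fin N))| := le_abs_self _
      have h3 : |c u (Classical.arbitrary (Fin N)) + κ' (Classical.arbitrary (Fin N))| ≤
          ∑ j, |c u j + κ' j| :=
        Finset.single_le_sum (f := fun j => |c u j + κ' j|) (fun j _ => abs_nonneg _) (Finset.mem_univ _)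
      linarith
  -- the selected function written as a sum of indicators
  have hfeq : ∀ κ' : Fin N → ℝ, (fun u => c u (T u) + κ' (T u)) =
      fun u => ∑ i, (T ⁻¹' {i}).indicator (fun u => c u i + κ' i) u := by
    intro κ'
    funext u
    rw [Finset.sum_eq_single (T u)]
    · simp [Set.indicator_apply]
    · intro j _ hj
      simp [Set.indicator_apply, Ne.symm hj]
    · intro h; exact absurd (Finset.mem_univ _) h
  have hfint : ∀ κ' : Fin N → ℝ, Integrable (fun u => c u (T u) + κ' (T u)) ρ := by
    intro κ'
    rw [hfeq κ']
    exact integrable_finset_sum _ (fun i _ =>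
      (((hint i).add (integrable_const _)).indicator (hT (measurableSet_singleton i))))
  -- pointwise inequality and integral monotonicity
  have hmono : ∫ u, (⨅ i, (c u i + κ i)) ∂ρ ≤ ∫ u, (c u (T u) + κ (T u)) ∂ρ := by
    refine integral_mono (hinf_int κ) (hfint κ) fun u => ?_
    exact ciInf_le (Finite.bddBelow_range _) (T u)
  -- the difference of the selected functions
  have hdiff : ∫ u, (c u (T u) + κ (T u)) ∂ρ = (∫ u, (c u (T u) + γ (T u)) ∂ρ) +
      ∑ i, (ρ (T ⁻¹' {i})).toReal * (κ i - γ i) := by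
    have hptw : (fun u => c u (T u) + κ (T u)) = fun u =>
        (c u (T u) + γ (T u)) + ∑ i, (T ⁻¹' {i}).indicator (fun _ => κ i - γ i) u := by
      funext u
      have : ∑ i, (T ⁻¹' {i}).indicator (fun _ => κ i - γ i) u = κ (T u) - γ (T u) := by
        rw [Finset.sum_eq_single (T u)]
        · simp [Set.indicator_apply]
        · intro j _ hj
          simp [Set.indicator_apply, Ne.symm hj]
        · intro h; exact absurd (Finset.mem_univ _) h
      rw [this]; ring
    have hind_int : ∀ i : Fin N, Integrable ((T ⁻¹' {i}).indicator (fun _ : X => κ i - γ i)) ρ :=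
      fun i => (integrable_const _).indicator (hT (measurableSet_singleton i))
    rw [hptw, integral_add (hfint γ) (integrable_finset_sum _ fun i _ => hind_int i),
      integral_finset_sum _ (fun i _ => hind_int i)]
    congr 1
    refine Finset.sum_congr rfl fun i _ => ?_
    rw [integral_indicator_const _ (hT (measurableSet_singleton i)), smul_eq_mul, mul_comm]
    exact mul_comm _ _
  have heqγ : ∫ u, (c u (T u) + γ (T u)) ∂ρ = ∫ u, (⨅ i, (c u i + γ i)) ∂ρ :=
    integral_congr_ae hTmin
  have key : ∫ u, (⨅ i, (c u i + κ i)) ∂ρ ≤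
      (∫ u, (⨅ i, (c u i + γ i)) ∂ρ) + ∑ i, (ρ (T ⁻¹' {i})).toReal * (κ i - γ i) := by
    rw [← heqγ, ← hdiff]; exact hmono
  have hsum : ∑ i, v i * (κ i - γ i) =
      (∑ i, (ρ (T ⁻¹' {i})).toReal * (κ i - γ i)) - ((∑ i, κ i * α i) - ∑ i, γ i * α i) := by
    rw [← Finset.sum_sub_distrib, ← Finset.sum_sub_distrib]
    refine Finset.sum_congr rfl fun i _ => ?_
    rw [hv]; ring
  rw [hsum]
  linarith
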